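/- Let γ have positive imaginary part, q = e^{2iγ}, α with sin α ≠ 0 and θ'(α) ≠ 0, ω = -2cos(2α), and define χ(z) = (1/(4 sin^2 α)) · (1 - (θ'(0)/(2θ'(α))) · (θ(z+α)/θ(z) + θ(z-α)/θ(z))), where θ is the Jacobi-type theta function. Then χ satisfies the difference equation χ(z+2γ) + ω χ(z+γ) + χ(z) = 1 for all z where χ is defined, and χ(0) = 0. -/

import Mathlib

open Complex Filter Topology

noncomputable section

local notation "π" => Real.pi

namespace ChiDiff

lemma cexp_int_pi (m : ℤ) : Complex.exp ((m : ℂ) * (π * I)) = (-1 : ℂ) ^ m := by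
  rw [Complex.exp_int_mul, Complex.exp_pi_mul_I]




/-- The theta function vanishes at the half period `1/2 + τ/2`. -/
lemma jt2_half_zero {τ : ℂ} (hτ : 0 < τ.im) : jacobiTheta₂ (1/2 + τ/2) τ = 0 := by
  have hs := (hasSum_jacobiTheta₂_term (1/2 + τ/2) hτ).nat_add_neg_add_one
  have key : ∀ n : ℕ, jacobiTheta₂_term (-((n : ℤ) + 1)) (1/2 + τ/2) τ
      = - jacobiTheta₂_term (n : ℤ) (1/2 + τ/2) τ := by
    intro n
    unfold jacobiTheta₂_term
    have h1 : 2 * (π : ℂ) * I * ((-((n : ℤ) + 1) : ℤ) : ℂ) * (1/2 + τ/2)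
        + (π : ℂ) * I * ((-((n : ℤ) + 1) : ℤ) : ℂ) ^ 2 * τ
        = ((-(2 * (n : ℤ) + 1) : ℤ) : ℂ) * (π * I)
          + (2 * (π : ℂ) * I * ((n : ℤ) : ℂ) * (1/2 + τ/2) + (π : ℂ) * I * ((n : ℤ) : ℂ) ^ 2 * τ) := by
      push_cast; ring
    rw [h1, Complex.exp_add, cexp_int_pi]
    have : Odd (-(2 * (n : ℤ) + 1)) := ⟨-((n : ℤ) + 1), by ring⟩
    rw [this.neg_one_zpow]
    ring
  have : HasSum (fun _ : ℕ => (0 : ℂ)) (jacobiTheta₂ (1/2 + τ/2) τ) := by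
    refine hs.congr_fun fun n => ?_
    rw [key n]; ring
  simpa using this.unique hasSum_zero

/-- The z-derivative of theta at the half period. -/
def Ψ (τ : ℂ) : ℂ := jacobiTheta₂' (1/2 + τ/2) τ

lemma psi_hasSum {τ : ℂ} (hτ : 0 < τ.im) :
    HasSum (fun n : ℕ => (2 * (π : ℂ) * I) * (((-1 : ℂ) ^ n * (2 * (n : ℂ) + 1))
      * Complex.exp ((π : ℂ) * I * τ) ^ (n * (n + 1)))) (Ψ τ) := by
  have hs := (hasSum_jacobiTheta₂'_term (1/2 + τ/2) hτ).nat_add_neg_add_one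
  refine hs.congr_fun fun n => ?_
  unfold jacobiTheta₂'_term jacobiTheta₂_term
  have e1 : 2 * (π : ℂ) * I * ((n : ℤ) : ℂ) * (1/2 + τ/2) + (π : ℂ) * I * ((n : ℤ) : ℂ) ^ 2 * τ
      = ((n : ℤ) : ℂ) * (π * I) + ((n * (n + 1) : ℕ) : ℂ) * ((π : ℂ) * I * τ) := by
    push_cast; ring
  have e2 : 2 * (π : ℂ) * I * ((-((n : ℤ) + 1) : ℤ) : ℂ) * (1/2 + τ/2)
        + (π : ℂ) * I * ((-((n : ℤ) + 1) : ℤ) : ℂ) ^ 2 * τ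
      = ((-((n : ℤ) + 1) : ℤ) : ℂ) * (π * I) + ((n * (n + 1) : ℕ) : ℂ) * ((π : ℂ) * I * τ) := by
    push_cast; ring
  rw [e1, e2, Complex.exp_add, Complex.exp_add, cexp_int_pi, cexp_int_pi,
    ← Complex.exp_nat_mul]
  have hz1 : ((-1 : ℂ)) ^ ((n : ℤ)) = (-1 : ℂ) ^ (n : ℕ) := zpow_natCast _ _
  have hz2 : ((-1 : ℂ)) ^ (-((n : ℤ) + 1)) = -(-1 : ℂ) ^ (n : ℕ) := by
    have h1 : ((n : ℤ) + 1) = ((n + 1 : ℕ) : ℤ) := by push_cast; ring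
    rw [zpow_neg, h1, zpow_natCast, ← inv_pow, inv_neg_one, pow_succ]
    ring
  rw [hz1, hz2]
  push_cast
  ring

lemma two_pi_I_ne : (2 * (π : ℂ) * I) ≠ 0 := by
  simp [Real.pi_ne_zero, Complex.I_ne_zero, Complex.ofReal_ne_zero]

private lemma nat_le_three_pow (n : ℕ) : (2 * n + 1 : ℝ) ≤ 3 ^ n := by
  induction n with
  | zero => norm_num
  | succ k ih =>
    push_cast at ih ⊢
    rw [pow_succ]
    linarith

lemma psi_base {τ : ℂ} (hτ2 : 1/2 ≤ τ.im) : Ψ τ ≠ 0 := by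
  have hτ : 0 < τ.im := lt_of_lt_of_le (by norm_num) hτ2
  set E : ℂ := Complex.exp ((π : ℂ) * I * τ) with hE
  set r : ℝ := ‖E‖ with hr
  have hrval : r = Real.exp (-π * τ.im) := by
    rw [hr, hE, Complex.norm_exp]
    congr 1
    simp [Complex.mul_re, Complex.mul_im]
  have hr0 : 0 ≤ r := norm_nonneg _
  have hr1 : r ≤ Real.exp (-π/2) := by
    rw [hrval]
    apply Real.exp_le_exp.2
    nlinarith [Real.pi_pos]
  have hexp6 : (6:ℝ) < Real.exp π := by
    have h3 : (3:ℝ) < π := Real.pi_gt_three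
    have h1 : Real.exp 3 ≤ Real.exp π := Real.exp_le_exp.2 h3.le
    have he : (2.7182818283 : ℝ) < Real.exp 1 := Real.exp_one_gt_d9
    have h2 : Real.exp 3 = Real.exp 1 ^ 3 := by
      rw [← Real.exp_nat_mul]; norm_num
    have h4 : (2.7182818283:ℝ) ^ 3 ≤ (Real.exp 1) ^ 3 :=
      pow_le_pow_left₀ (by norm_num) he.le 3
    norm_num at h4
    linarith
  have hx : 3 * r ^ 2 < 1/2 := by
    have h1 : r ^ 2 ≤ Real.exp (-π/2) ^ 2 := pow_le_pow_left₀ hr0 hr1 2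
    have h2 : Real.exp (-π/2) ^ 2 = (Real.exp π)⁻¹ := by
      rw [← Real.exp_nat_mul, ← Real.exp_neg]; congr 1; push_cast; ring
    have h3 : (Real.exp π)⁻¹ < 1/6 := by
      rw [inv_lt_comm₀ (Real.exp_pos π) (by norm_num)]
      linarith
    nlinarith
  set x : ℝ := 3 * r ^ 2 with hxdef
  have hx0 : 0 ≤ x := by positivity
  have hx1 : x < 1 := by linarith
  -- the series terms
  set a : ℕ → ℂ := fun n => ((-1 : ℂ) ^ n * (2 * (n : ℂ) + 1)) * E ^ (n * (n + 1)) with ha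
  have hbound : ∀ n : ℕ, ‖a n‖ ≤ x ^ n := by
    intro n
    have h1 : ‖a n‖ = (2 * n + 1 : ℝ) * r ^ (n * (n + 1)) := by
      rw [ha]
      simp only [norm_mul, norm_pow]
      have : ‖(-1 : ℂ)‖ = 1 := by norm_num
      rw [this, one_pow, one_mul]
      congr 1
      have : (2 * (n : ℂ) + 1) = ((2 * n + 1 : ℕ) : ℂ) := by push_cast; ring
      rw [this, Complex.norm_natCast]
      push_cast; ring
    have hr1' : r ≤ 1 := by
      calc r ≤ Real.exp (-π/2) := hr1
        _ ≤ 1 := Real.exp_le_one_iff.mpr (by nlinarith [Real.pi_pos])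
    have h2 : r ^ (n * (n + 1)) ≤ r ^ (2 * n) :=
      pow_le_pow_of_le_one hr0 hr1' (by cases n with
        | zero => simp
        | succ m => nlinarith)
    calc ‖a n‖ = (2 * n + 1 : ℝ) * r ^ (n * (n + 1)) := h1
      _ ≤ 3 ^ n * r ^ (2 * n) := by
          apply mul_le_mul (nat_le_three_pow n) h2 (by positivity) (by positivity)
      _ = x ^ n := by rw [hxdef, mul_pow, pow_mul]
  have hsum := psi_hasSum hτ
  have hsa : Summable a :=
    Summable.of_norm_bounded (summable_geometric_of_lt_one hx0 hx1) hbound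
  have htsum : Ψ τ = (2 * (π : ℂ) * I) * ∑' n, a n := by
    rw [← hsa.tsum_mul_left]
    exact hsum.tsum_eq.symm
  have ha0 : a 0 = 1 := by simp [ha]
  have htail : ‖∑' n : ℕ, a (n + 1)‖ < 1 := by
    have hs1 : Summable (fun n : ℕ => x ^ (n + 1)) := by
      simp_rw [pow_succ']
      exact (summable_geometric_of_lt_one hx0 hx1).mul_left x
    have hs2 : Summable (fun n : ℕ => ‖a (n + 1)‖) :=
      Summable.of_nonneg_of_le (fun n => norm_nonneg _) (fun n => hbound (n + 1)) hs1
    calc ‖∑' n : ℕ, a (n + 1)‖ ≤ ∑' n : ℕ, ‖a (n + 1)‖ := norm_tsum_le_tsum_norm hs2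
      _ ≤ ∑' n : ℕ, x ^ (n + 1) := Summable.tsum_le_tsum (fun n => hbound (n + 1)) hs2 hs1
      _ = x * (1 - x)⁻¹ := by
          simp_rw [pow_succ']
          rw [tsum_mul_left, tsum_geometric_of_lt_one hx0 hx1]
      _ < 1 := by
          rw [← div_eq_mul_inv, div_lt_one (by linarith)]
          linarith
  have hane : ∑' n, a n ≠ 0 := by
    rw [Summable.tsum_eq_zero_add hsa, ha0]
    intro h
    have : ∑' n : ℕ, a (n + 1) = -1 := by linear_combination h
    rw [this] at htail
    simp at htail
  rw [htsum]
  exact mul_ne_zero two_pi_I_ne hane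

lemma neg_one_zpow_sq (n : ℤ) : (-1 : ℂ) ^ (n ^ 2) = (-1 : ℂ) ^ n := by
  rcases Int.even_or_odd n with h | h
  · rw [h.neg_one_zpow, Even.neg_one_zpow (by rw [sq]; exact h.mul_right n)]
  · rw [h.neg_one_zpow, Odd.neg_one_zpow (h.pow)]

lemma jt2'_add_one (z τ : ℂ) : jacobiTheta₂' z (τ + 1) = jacobiTheta₂' (z + 1/2) τ := by
  unfold jacobiTheta₂' jacobiTheta₂'_term jacobiTheta₂_term
  refine tsum_congr fun n => ?_
  congr 1
  have h1 : 2 * (π : ℂ) * I * (n : ℂ) * z + (π : ℂ) * I * (n : ℂ) ^ 2 * (τ + 1)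
      = (((n ^ 2 : ℤ)) : ℂ) * (π * I) + (2 * (π : ℂ) * I * (n : ℂ) * z + (π : ℂ) * I * (n : ℂ) ^ 2 * τ) := by
    push_cast; ring
  have h2 : 2 * (π : ℂ) * I * (n : ℂ) * (z + 1/2) + (π : ℂ) * I * (n : ℂ) ^ 2 * τ
      = ((n : ℤ) : ℂ) * (π * I) + (2 * (π : ℂ) * I * (n : ℂ) * z + (π : ℂ) * I * (n : ℂ) ^ 2 * τ) := by
    push_cast; ring
  rw [h1, h2]
  simp only [Complex.exp_add, cexp_int_pi, neg_one_zpow_sq]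

lemma psi_add_one (τ : ℂ) : Ψ (τ + 1) = Ψ τ := by
  unfold Ψ
  rw [jt2'_add_one]
  have : (1/2 + (τ + 1)/2 + 1/2 : ℂ) = (1/2 + τ/2) + 1 := by ring
  rw [this, jacobiTheta₂'_add_left]

lemma psi_int (n : ℤ) (τ : ℂ) : Ψ (τ + n) = Ψ τ := by
  induction n using Int.induction_on with
  | zero => simp
  | succ k ih =>
    have : (τ + ((k : ℤ) + 1 : ℤ) : ℂ) = (τ + (k : ℤ)) + 1 := by push_cast; ring
    rw [this, psi_add_one, ih]
  | pred k ih =>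
    have : (τ + (-(k : ℤ) : ℤ) : ℂ) = (τ + (-(k : ℤ) - 1 : ℤ)) + 1 := by push_cast; ring
    rw [this, psi_add_one] at ih
    exact ih

lemma psi_S {τ : ℂ} (hτ : 0 < τ.im) (h : Ψ (-1/τ) ≠ 0) : Ψ τ ≠ 0 := by
  have hτ0 : τ ≠ 0 := by
    intro h0; rw [h0] at hτ; simp at hτ
  have hτ' : 0 < (-1/τ).im := by
    have : (-1/τ : ℂ) = -τ⁻¹ := by ring
    rw [this, neg_im, inv_im, neg_div, neg_neg]
    exact div_pos hτ (normSq_pos.mpr hτ0)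
  set z : ℂ := 1/2 + τ/2 with hz
  set τ' : ℂ := -1/τ with hτ'def
  have hzdiv : z / τ = -((1/2 + τ'/2) - 1) := by
    rw [hz, hτ'def]
    field_simp
    ring
  have hth' : jacobiTheta₂' (z/τ) τ' = -Ψ τ' := by
    rw [hzdiv, jacobiTheta₂'_neg_left]
    have : (1/2 + τ'/2 - 1 : ℂ) + 1 = 1/2 + τ'/2 := by ring
    rw [← jacobiTheta₂'_add_left (1/2 + τ'/2 - 1) τ', this]
    rfl
  have hth0 : jacobiTheta₂ (z/τ) τ' = 0 := by
    rw [hzdiv, jacobiTheta₂_neg_left]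
    have : (1/2 + τ'/2 - 1 : ℂ) + 1 = 1/2 + τ'/2 := by ring
    rw [← jacobiTheta₂_add_left (1/2 + τ'/2 - 1) τ', this]
    exact jt2_half_zero hτ'
  have hfe := jacobiTheta₂'_functional_equation z τ
  rw [hth', hth0, mul_zero, sub_zero] at hfe
  have : Ψ τ = 1 / (-I * τ) ^ (1/2 : ℂ) * Complex.exp (-(π:ℂ) * I * z ^ 2 / τ) / τ * (-Ψ τ') := hfe
  rw [this]
  apply mul_ne_zero
  · apply div_ne_zero
    apply mul_ne_zero
    · apply one_div_ne_zero
      intro hc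
      rw [Complex.cpow_eq_zero_iff] at hc
      have : -I * τ ≠ 0 := mul_ne_zero (neg_ne_zero.mpr I_ne_zero) hτ0
      exact this hc.1
    · exact Complex.exp_ne_zero _
    · exact hτ0
  · exact neg_ne_zero.mpr h

lemma psi_ne_aux : ∀ k : ℕ, ∀ τ : ℂ, 0 < τ.im → 1/2 ≤ 2 ^ k * τ.im → Ψ τ ≠ 0 := by
  intro k
  induction k with
  | zero => intro τ hτ hk; exact psi_base (by simpa using hk)
  | succ k ih =>
    intro τ hτ hk
    by_cases hbig : 1/2 ≤ τ.im
    · exact psi_base hbig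
    push_neg at hbig
    set m : ℤ := round τ.re with hm
    set σ : ℂ := τ - (m : ℂ) with hσ
    have him : σ.im = τ.im := by simp [hσ]
    have hre : |σ.re| ≤ 1/2 := by
      have := abs_sub_round τ.re
      simpa [hσ] using this
    have hψeq : Ψ σ = Ψ τ := by
      have := psi_int (-m) τ
      have h2 : (τ + ((-m : ℤ) : ℂ)) = σ := by push_cast [hσ]; ring
      rw [h2] at this
      exact this
    have hσim : 0 < σ.im := him ▸ hτ
    have hσ0 : σ ≠ 0 := fun h => by rw [h] at hσim; simp at hσim
    have hnsq : Complex.normSq σ < 1/2 := by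
      rw [Complex.normSq_apply]
      have h1 : σ.re * σ.re ≤ 1/4 := by
        have := abs_le.mp hre
        nlinarith
      have h2 : σ.im * σ.im < 1/4 := by
        rw [him]; nlinarith
      linarith
    have hτ'im : (-1/σ).im = σ.im / Complex.normSq σ := by
      have : (-1/σ : ℂ) = -σ⁻¹ := by ring
      rw [this, neg_im, inv_im, neg_div, neg_neg]
    have hτ'pos : 0 < (-1/σ).im := by
      rw [hτ'im]; exact div_pos hσim (normSq_pos.mpr hσ0)
    have hτ'big : 1/2 ≤ 2 ^ k * (-1/σ).im := by
      rw [hτ'im]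
      have hnsq0 : 0 < Complex.normSq σ := normSq_pos.mpr hσ0
      have key : 2 * σ.im ≤ σ.im / Complex.normSq σ := by
        rw [le_div_iff₀ hnsq0]
        nlinarith
      have h2 : (1:ℝ)/2 ≤ 2 ^ (k+1) * σ.im := by rw [him]; exact hk
      have hp : (0:ℝ) < 2 ^ k := by positivity
      calc (1:ℝ)/2 ≤ 2 ^ (k+1) * σ.im := h2
        _ = 2 ^ k * (2 * σ.im) := by ring
        _ ≤ 2 ^ k * (σ.im / Complex.normSq σ) := by
            exact mul_le_mul_of_nonneg_left key hp.le
    rw [← hψeq]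
    exact psi_S hσim (ih _ hτ'pos hτ'big)

lemma psi_ne {τ : ℂ} (hτ : 0 < τ.im) : Ψ τ ≠ 0 := by
  obtain ⟨k, hk⟩ : ∃ k : ℕ, 1/(2 * τ.im) < 2 ^ k :=
    pow_unbounded_of_one_lt _ one_lt_two
  refine psi_ne_aux k τ hτ ?_
  rw [div_lt_iff₀ (by linarith)] at hk
  nlinarith

def Th (γ : ℂ) (z : ℂ) : ℂ :=
  ∑' n : ℕ, ((-1) ^ n * (Complex.exp (2 * I * γ)) ^ (n * (n + 1) / 2)) *
    Complex.sin ((2 * (n : ℂ) + 1) * z)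

def W (γ z : ℂ) : ℂ := 1/2 + γ/(2*(π:ℂ)) + z/(π:ℂ)

lemma tau_im {γ : ℂ} (hγ : 0 < γ.im) : 0 < (γ/(π:ℂ)).im := by
  rw [div_eq_mul_inv, ← Complex.ofReal_inv, Complex.mul_im]
  simp only [Complex.ofReal_re, Complex.ofReal_im, mul_zero, zero_add]
  have := Real.pi_pos
  positivity

lemma hsin (x : ℂ) : Complex.sin x = (2*I)⁻¹ * (Complex.exp (x*I) - Complex.exp (-(x*I))) := by
  simp only [Complex.sin]
  have h1 : -x * I = -(x*I) := by ring
  rw [h1]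
  field_simp
  linear_combination (Complex.exp (-(x*I)) - Complex.exp (x*I)) * Complex.I_sq

lemma Th_hasSum {γ : ℂ} (hγ : 0 < γ.im) (z : ℂ) :
    HasSum (fun n : ℕ => ((-1) ^ n * (Complex.exp (2 * I * γ)) ^ (n * (n + 1) / 2)) *
      Complex.sin ((2 * (n : ℂ) + 1) * z))
      ((2*I)⁻¹ * Complex.exp (I*z) * jacobiTheta₂ (W γ z) (γ/(π:ℂ))) := by
  have hτ := tau_im hγ
  have hs := (hasSum_jacobiTheta₂_term (W γ z) hτ).nat_add_neg_add_one
  set c : ℂ := 2 * I * Complex.exp (-(z*I)) with hc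
  have hkey : ∀ n : ℕ, jacobiTheta₂_term ((n : ℤ)) (W γ z) (γ/(π:ℂ))
      + jacobiTheta₂_term (-((n : ℤ) + 1)) (W γ z) (γ/(π:ℂ))
      = c * (((-1) ^ n * (Complex.exp (2 * I * γ)) ^ (n * (n + 1) / 2)) *
        Complex.sin ((2 * (n : ℂ) + 1) * z)) := by
    intro n
    have hπ : (π : ℂ) ≠ 0 := Complex.ofReal_ne_zero.mpr Real.pi_ne_zero
    have hk2 : (n*(n+1)/2) * 2 = n*(n+1) := Nat.div_mul_cancel (Nat.even_mul_succ_self n).two_dvd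
    have hcc : 2 * (((n*(n+1)/2 : ℕ)) : ℂ) = (n:ℂ)^2 + (n:ℂ) := by
      have h := congrArg (Nat.cast : ℕ → ℂ) hk2
      push_cast at h
      linear_combination h
    unfold jacobiTheta₂_term
    have hA : 2*(π:ℂ)*I*(((n:ℤ)):ℂ)*(W γ z) + (π:ℂ)*I*(((n:ℤ)):ℂ)^2*(γ/(π:ℂ))
        = (((n:ℤ)):ℂ)*((π:ℂ)*I) + ((((n*(n+1)/2:ℕ)):ℂ)*(2*I*γ) + (((2*(n:ℂ)+1)*z)*I + -(z*I))) := by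
      unfold W; push_cast; field_simp
      linear_combination (-γ) * hcc
    have hB : 2*(π:ℂ)*I*((-((n:ℤ)+1) : ℤ):ℂ)*(W γ z) + (π:ℂ)*I*((-((n:ℤ)+1) : ℤ):ℂ)^2*(γ/(π:ℂ))
        = ((-((n:ℤ)+1) : ℤ):ℂ)*((π:ℂ)*I) + ((((n*(n+1)/2:ℕ)):ℂ)*(2*I*γ) + (-(((2*(n:ℂ)+1)*z)*I) + -(z*I))) := by
      unfold W; push_cast; field_simp
      linear_combination (-γ) * hcc
    rw [hA, hB]
    simp only [Complex.exp_add]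
    rw [cexp_int_pi, cexp_int_pi]
    have hz1 : ((-1 : ℂ)) ^ ((n : ℤ)) = (-1 : ℂ) ^ (n : ℕ) := zpow_natCast _ _
    have hz2 : ((-1 : ℂ)) ^ (-((n : ℤ) + 1)) = -(-1 : ℂ) ^ (n : ℕ) := by
      have h1 : ((n : ℤ) + 1) = ((n + 1 : ℕ) : ℤ) := by push_cast; ring
      rw [zpow_neg, h1, zpow_natCast, ← inv_pow, inv_neg_one, pow_succ]
      ring
    rw [hz1, hz2, Complex.exp_nat_mul, hsin, hc]
    field_simp
    ring
  have hs2 : HasSum (fun n : ℕ => c * (((-1) ^ n * (Complex.exp (2 * I * γ)) ^ (n * (n + 1) / 2)) *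
      Complex.sin ((2 * (n : ℂ) + 1) * z))) (jacobiTheta₂ (W γ z) (γ/(π:ℂ))) :=
    hs.congr_fun fun n => (hkey n).symm
  have hcne : c ≠ 0 := by
    rw [hc]
    exact mul_ne_zero (mul_ne_zero two_ne_zero I_ne_zero) (Complex.exp_ne_zero _)
  have := hs2.mul_left c⁻¹
  simp_rw [← mul_assoc, inv_mul_cancel₀ hcne, one_mul] at this
  rw [show (2*I)⁻¹ * Complex.exp (I*z) = c⁻¹ by rw [hc, Complex.exp_neg, mul_comm z I, mul_inv (2*I), inv_inv]]
  exact this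

lemma Th_eq {γ : ℂ} (hγ : 0 < γ.im) (z : ℂ) :
    Th γ z = (2*I)⁻¹ * Complex.exp (I*z) * jacobiTheta₂ (W γ z) (γ/(π:ℂ)) :=
  (Th_hasSum hγ z).tsum_eq

lemma W_add (γ z ζ : ℂ) : W γ (z + ζ) = W γ z + ζ/(π:ℂ) := by
  unfold W; ring

lemma Th_quasi {γ : ℂ} (hγ : 0 < γ.im) (z : ℂ) :
    Th γ (z + γ) = -Complex.exp (-(2*I*z) - I*γ) * Th γ z := by
  have hπ : (π : ℂ) ≠ 0 := Complex.ofReal_ne_zero.mpr Real.pi_ne_zero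
  rw [Th_eq hγ, Th_eq hγ, W_add, jacobiTheta₂_add_left']
  have hX : I*(z+γ) + (-(π:ℂ)*I*(γ/(π:ℂ) + 2*W γ z)) = (-(2*I*z) - I*γ + I*z) + -((π:ℂ)*I) := by
    unfold W; field_simp
    ring
  have key : Complex.exp (I*(z+γ)) * Complex.exp (-(π:ℂ)*I*(γ/(π:ℂ) + 2*W γ z))
      = -(Complex.exp (-(2*I*z) - I*γ) * Complex.exp (I*z)) := by
    rw [← Complex.exp_add, hX, Complex.exp_add, Complex.exp_neg, Complex.exp_pi_mul_I,
      inv_neg_one, ← Complex.exp_add]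
    ring
  linear_combination (2*I)⁻¹ * jacobiTheta₂ (W γ z) (γ/(π:ℂ)) * key

lemma Th_hasDerivAt {γ : ℂ} (hγ : 0 < γ.im) (z : ℂ) :
    HasDerivAt (Th γ) ((2*I)⁻¹ * Complex.exp (I*z) *
      (I * jacobiTheta₂ (W γ z) (γ/(π:ℂ)) + jacobiTheta₂' (W γ z) (γ/(π:ℂ)) * (π:ℂ)⁻¹)) z := by
  have hτ := tau_im hγ
  have hW : HasDerivAt (fun w => W γ w) ((π:ℂ)⁻¹) z := by
    unfold W
    simpa using (((hasDerivAt_id z).div_const (π:ℂ)).const_add (1/2 + γ/(2*(π:ℂ))))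
  have h1 : HasDerivAt (fun w => jacobiTheta₂ (W γ w) (γ/(π:ℂ)))
      (jacobiTheta₂' (W γ z) (γ/(π:ℂ)) * (π:ℂ)⁻¹) z :=
    (hasDerivAt_jacobiTheta₂_fst (W γ z) hτ).comp z hW
  have h2 : HasDerivAt (fun w => (2*I)⁻¹ * Complex.exp (I*w))
      ((2*I)⁻¹ * (Complex.exp (I*z) * I)) z := by
    simpa using (((hasDerivAt_id z).const_mul I).cexp).const_mul ((2*I)⁻¹)
  have h3 := h2.mul h1
  have hfe : Th γ = fun w => (2*I)⁻¹ * Complex.exp (I*w) * jacobiTheta₂ (W γ w) (γ/(π:ℂ)) :=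
    funext fun w => Th_eq hγ w
  rw [hfe]
  exact h3.congr_deriv (by ring)

lemma Th_odd (γ z : ℂ) : Th γ (-z) = -Th γ z := by
  unfold Th
  rw [← tsum_neg]
  refine tsum_congr fun n => ?_
  have h : (2*(n:ℂ)+1) * -z = -((2*(n:ℂ)+1)*z) := by ring
  rw [h, Complex.sin_neg]
  ring

lemma Th_zero (γ : ℂ) : Th γ 0 = 0 := by
  unfold Th
  convert tsum_zero with n
  simp


variable {γ : ℂ}

lemma hW0 (γ : ℂ) : W γ 0 = 1/2 + (γ/(π:ℂ))/2 := by unfold W; ring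

lemma deriv_Th (hγ : 0 < γ.im) (x : ℂ) : deriv (Th γ) x = (2*I)⁻¹ * Complex.exp (I*x) *
    (I * jacobiTheta₂ (W γ x) (γ/(π:ℂ)) + jacobiTheta₂' (W γ x) (γ/(π:ℂ)) * (π:ℂ)⁻¹) :=
  (Th_hasDerivAt hγ x).deriv

lemma deriv_Th_zero (hγ : 0 < γ.im) :
    deriv (Th γ) 0 = (2*I)⁻¹ * (Ψ (γ/(π:ℂ)) * (π:ℂ)⁻¹) := by
  rw [deriv_Th hγ 0, hW0, jt2_half_zero (tau_im hγ)]
  show (2*I)⁻¹ * Complex.exp (I*0) * (I * 0 + Ψ (γ/(π:ℂ)) * (π:ℂ)⁻¹) = _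
  rw [mul_zero, Complex.exp_zero]
  ring

lemma deriv_Th_zero_ne (hγ : 0 < γ.im) : deriv (Th γ) 0 ≠ 0 := by
  rw [deriv_Th_zero hγ]
  have hπ : ((π:ℝ) : ℂ) ≠ 0 := Complex.ofReal_ne_zero.mpr Real.pi_ne_zero
  exact mul_ne_zero (inv_ne_zero (mul_ne_zero two_ne_zero I_ne_zero))
    (mul_ne_zero (psi_ne (tau_im hγ)) (inv_ne_zero hπ))

lemma deriv_Th_neg (hγ : 0 < γ.im) (x : ℂ) : deriv (Th γ) (-x) = deriv (Th γ) x := by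
  have h := Th_hasDerivAt hγ x
  have h' : HasDerivAt (Th γ) ((2*I)⁻¹ * Complex.exp (I*x) *
      (I * jacobiTheta₂ (W γ x) (γ/(π:ℂ)) + jacobiTheta₂' (W γ x) (γ/(π:ℂ)) * (π:ℂ)⁻¹)) (-(-x)) := by
    rw [neg_neg]; exact h
  have h1 : HasDerivAt (fun w : ℂ => Th γ (-w))
      ((2*I)⁻¹ * Complex.exp (I*x) *
        (I * jacobiTheta₂ (W γ x) (γ/(π:ℂ)) + jacobiTheta₂' (W γ x) (γ/(π:ℂ)) * (π:ℂ)⁻¹) * (-1))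
      (-x) := h'.comp (-x) (hasDerivAt_neg (-x))
  have h2 : HasDerivAt (fun w : ℂ => -Th γ (-w)) _ (-x) := h1.neg
  have h3 : (fun w : ℂ => -Th γ (-w)) = Th γ := funext fun w => by rw [Th_odd]; ring
  rw [h3] at h2
  rw [h2.deriv, (Th_hasDerivAt hγ x).deriv]
  ring

end ChiDiff
end

open ChiDiff Complex Filter Topology in
/-- Let `Im γ > 0`, `q = e^{2iγ}`, `sin α ≠ 0`, `θ'(α) ≠ 0`, `ω = -2cos(2α)`, and
`χ(z) = (1/(4 sin² α)) (1 - (θ'(0)/(2θ'(α))) (θ(z+α)/θ(z) + θ(z-α)/θ(z)))`,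
where `θ(z) = Σ_{n≥0} (-1)^n q^{n(n+1)/2} sin((2n+1)z)`. Then `χ` satisfies the
difference equation `χ(z+2γ) + ω χ(z+γ) + χ(z) = 1` wherever it is defined, and
`χ(0) = 0` (as a removable-singularity limit). -/
theorem chi_difference_equation (γ α : ℂ) (hγ : 0 < γ.im) (hα : Complex.sin α ≠ 0) :
    let q : ℂ := Complex.exp (2 * Complex.I * γ)
    let θ : ℂ → ℂ := fun z =>
      ∑' n : ℕ, ((-1) ^ n * q ^ (n * (n + 1) / 2)) * Complex.sin ((2 * (n : ℂ) + 1) * z)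
    let ω : ℂ := -2 * Complex.cos (2 * α)
    let χ : ℂ → ℂ := fun z => (1 / (4 * Complex.sin α ^ 2)) *
      (1 - (deriv θ 0 / (2 * deriv θ α)) * (θ (z + α) / θ z + θ (z - α) / θ z))
    deriv θ α ≠ 0 →
      (∀ z : ℂ, θ z ≠ 0 → θ (z + γ) ≠ 0 → θ (z + 2 * γ) ≠ 0 →
        χ (z + 2 * γ) + ω * χ (z + γ) + χ z = 1) ∧
      Filter.Tendsto χ (nhdsWithin 0 {(0 : ℂ)}ᶜ) (nhds 0) := by
  intro q θ ω χ hθα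
  have hθeq : θ = Th γ := rfl
  rw [hθeq] at hθα
  have hχ : ∀ u, χ u = (1 / (4 * Complex.sin α ^ 2)) *
      (1 - (deriv (Th γ) 0 / (2 * deriv (Th γ) α)) *
        (Th γ (u + α) / Th γ u + Th γ (u - α) / Th γ u)) := fun u => rfl
  have hω : ω = -2 * Complex.cos (2 * α) := rfl
  have hxy : Complex.exp (α*I) * Complex.exp (-(α*I)) = 1 := by
    rw [← Complex.exp_add]; simp
  have hE2 : Complex.exp (2*I*α) = Complex.exp (α*I) ^ 2 := by
    rw [← Complex.exp_nat_mul]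
    congr 1
    push_cast; ring
  have hG2 : Complex.exp (-(2*I*α)) = Complex.exp (-(α*I)) ^ 2 := by
    rw [← Complex.exp_nat_mul]
    congr 1
    push_cast; ring
  have hEG : Complex.exp (2*I*α) * Complex.exp (-(2*I*α)) = 1 := by
    rw [← Complex.exp_add]; simp
  have h4s : 4 * Complex.sin α ^ 2 = 2 - Complex.exp (2*I*α) - Complex.exp (-(2*I*α)) := by
    rw [hsin α, hE2, hG2]
    have hxy' : Complex.exp (I*α) * Complex.exp (-(I*α)) = 1 := by rw [← Complex.exp_add]; simp
    field_simp
    linear_combination (4 * Complex.exp (I*α)^2 + 4 * Complex.exp (-(I*α))^2 - 8) * Complex.I_sq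
      + (-8 : ℂ) * hxy'
  have hcos : Complex.cos (2*α) = (Complex.exp (2*I*α) + Complex.exp (-(2*I*α)))/2 := by
    simp only [Complex.cos]
    rw [show 2*α*I = 2*I*α by ring, show -(2*α)*I = -(2*I*α) by ring]
  have h4sne : (4 : ℂ) * Complex.sin α ^ 2 ≠ 0 :=
    mul_ne_zero (by norm_num) (pow_ne_zero 2 hα)
  constructor
  · intro z hz h1 h2
    rw [hθeq] at hz
    rw [hχ, hχ, hχ, hω, hcos]
    clear hχ hω hθeq h1 h2 hθα
    clear_value q θ ω χ
    clear q θ ω χ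
    set s : ℂ := Complex.sin α with hs
    set k : ℂ := deriv (Th γ) 0 / (2 * deriv (Th γ) α) with hk
    set E : ℂ := Complex.exp (2*I*α) with hE
    set G : ℂ := Complex.exp (-(2*I*α)) with hG
    set a : ℂ := Complex.exp (-(2*I*z)) with ha
    set b : ℂ := Complex.exp (-(I*γ)) with hb
    have hane : a ≠ 0 := Complex.exp_ne_zero _
    have hbne : b ≠ 0 := Complex.exp_ne_zero _
    have hEne : E ≠ 0 := Complex.exp_ne_zero _
    have hGne : G ≠ 0 := Complex.exp_ne_zero _
    have Q : ∀ u : ℂ, Th γ (u + γ) = -Complex.exp (-(2*I*u) - I*γ) * Th γ u := Th_quasi hγ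
    have x1 : Complex.exp (-(2*I*(z+α)) - I*γ) = a * G * b := by
      rw [ha, hG, hb]; simp only [← Complex.exp_add]; try exact congrArg Complex.exp (by ring)
    have x2 : Complex.exp (-(2*I*(z + γ + α)) - I*γ) = a * G * (b*b*b) := by
      rw [ha, hG, hb]; simp only [← Complex.exp_add]; try exact congrArg Complex.exp (by ring)
    have x3 : Complex.exp (-(2*I*(z-α)) - I*γ) = a * E * b := by
      rw [ha, hE, hb]; simp only [← Complex.exp_add]; try exact congrArg Complex.exp (by ring)
    have x4 : Complex.exp (-(2*I*(z + γ - α)) - I*γ) = a * E * (b*b*b) := by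
      rw [ha, hE, hb]; simp only [← Complex.exp_add]; try exact congrArg Complex.exp (by ring)
    have x5 : Complex.exp (-(2*I*z) - I*γ) = a * b := by
      rw [ha, hb]; simp only [← Complex.exp_add]; try exact congrArg Complex.exp (by ring)
    have x6 : Complex.exp (-(2*I*(z+γ)) - I*γ) = a * (b*b*b) := by
      rw [ha, hb]; simp only [← Complex.exp_add]; try exact congrArg Complex.exp (by ring)
    have q1 : Th γ (z + γ + α) = -(a*G*b) * Th γ (z+α) := by
      rw [show z + γ + α = (z+α) + γ by ring, Q, x1]
    have q2 : Th γ (z + γ - α) = -(a*E*b) * Th γ (z-α) := by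
      rw [show z + γ - α = (z-α) + γ by ring, Q, x3]
    have q0 : Th γ (z + γ) = -(a*b) * Th γ z := by rw [Q, x5]
    have q0' : Th γ (z + 2*γ) = -(a*(b*b*b)) * (-(a*b) * Th γ z) := by
      rw [show z + 2*γ = (z+γ)+γ by ring, Q, x6, q0]
    have q1' : Th γ (z + 2*γ + α) = -(a*G*(b*b*b)) * (-(a*G*b) * Th γ (z+α)) := by
      rw [show z + 2*γ + α = (z + γ + α) + γ by ring, Q, x2, q1]
    have q2' : Th γ (z + 2*γ - α) = -(a*E*(b*b*b)) * (-(a*E*b) * Th γ (z-α)) := by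
      rw [show z + 2*γ - α = (z + γ - α) + γ by ring, Q, x4, q2]
    rw [q1, q2, q0, q0', q1', q2']
    set T0 : ℂ := Th γ z with hT0
    set T1 : ℂ := Th γ (z+α) with hT1
    set T2 : ℂ := Th γ (z-α) with hT2
    clear_value T0 T1 T2
    clear Q x1 x2 x3 x4 x5 x6 q1 q2 q0 q0' q1' q2' hT0 hT1 hT2
    have hab1 : -(a*b) ≠ 0 := neg_ne_zero.mpr (mul_ne_zero hane hbne)
    have hab2 : a^2*b^4 ≠ 0 := mul_ne_zero (pow_ne_zero 2 hane) (pow_ne_zero 4 hbne)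
    have key1 : -(a*G*b) * T1 / (-(a*b) * T0) + -(a*E*b) * T2 / (-(a*b) * T0)
        = G * (T1 / T0) + E * (T2 / T0) := by
      rw [show -(a*G*b) * T1 = -(a*b) * (G*T1) by ring,
        show -(a*E*b) * T2 = -(a*b) * (E*T2) by ring,
        mul_div_mul_left _ _ hab1, mul_div_mul_left _ _ hab1, mul_div_assoc, mul_div_assoc]
    have key2 : -(a*G*(b*b*b)) * (-(a*G*b) * T1) / (-(a*(b*b*b)) * (-(a*b) * T0))
          + -(a*E*(b*b*b)) * (-(a*E*b) * T2) / (-(a*(b*b*b)) * (-(a*b) * T0))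
        = G^2 * (T1 / T0) + E^2 * (T2 / T0) := by
      rw [show -(a*G*(b*b*b)) * (-(a*G*b) * T1) = (a^2*b^4) * (G^2*T1) by ring,
        show -(a*E*(b*b*b)) * (-(a*E*b) * T2) = (a^2*b^4) * (E^2*T2) by ring,
        show -(a*(b*b*b)) * (-(a*b) * T0) = (a^2*b^4) * T0 by ring,
        mul_div_mul_left _ _ hab2, mul_div_mul_left _ _ hab2, mul_div_assoc, mul_div_assoc]
    rw [key1, key2]
    set X : ℂ := T1 / T0 with hX
    set Y : ℂ := T2 / T0 with hY
    clear_value s k E G a b X Y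
    have hgz : G^2 + (-2 * ((E+G)/2)) * G + 1 = 0 := by
      linear_combination (-1 : ℂ) * hEG
    have hez : E^2 + (-2 * ((E+G)/2)) * E + 1 = 0 := by
      linear_combination (-1 : ℂ) * hEG
    have h24 : (2 : ℂ) + (-2 * ((E+G)/2)) = 4 * s^2 := by linear_combination -h4s
    have hc2 : (1 / (4 * s^2)) * (2 + (-2 * ((E+G)/2))) = 1 := by
      rw [h24]
      exact one_div_mul_cancel h4sne
    calc (1 / (4 * s^2)) * (1 - k * (G^2 * X + E^2 * Y))
          + (-2 * ((E+G)/2)) * ((1 / (4 * s^2)) * (1 - k * (G * X + E * Y)))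
          + (1 / (4 * s^2)) * (1 - k * (X + Y))
        = (1 / (4 * s^2)) * ((2 + (-2 * ((E+G)/2)))
            - k * (X * (G^2 + (-2 * ((E+G)/2)) * G + 1)
              + Y * (E^2 + (-2 * ((E+G)/2)) * E + 1))) := by
          ring
      _ = (1 / (4 * s^2)) * (2 + (-2 * ((E+G)/2))) := by rw [hgz, hez]; ring
      _ = 1 := hc2
  · have hd0ne := deriv_Th_zero_ne hγ
    have hχfun : χ = fun w => (1 / (4 * Complex.sin α ^ 2)) *
        (1 - (deriv (Th γ) 0 / (2 * deriv (Th γ) α)) *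
          ((Th γ (w + α) + Th γ (w - α)) / Th γ w)) := by
      funext w
      rw [hχ w, ← add_div]
    rw [hχfun]
    clear hχfun hχ hω hθeq
    clear_value q θ ω χ
    clear q θ ω χ
    set dα : ℂ := deriv (Th γ) α with hdα
    set d0 : ℂ := deriv (Th γ) 0 with hd0
    set N : ℂ → ℂ := fun w => Th γ (w + α) + Th γ (w - α) with hN
    have hNd : HasDerivAt N (dα + dα) 0 := by
      have h1 : HasDerivAt (fun w : ℂ => Th γ (w + α)) (dα * 1) 0 := by
        have hin : HasDerivAt (fun w : ℂ => w + α) 1 0 := (hasDerivAt_id 0).add_const α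
        have hout : HasDerivAt (Th γ) dα ((0:ℂ) + α) := by
          rw [zero_add, hdα]
          exact (Th_hasDerivAt hγ α).congr_deriv (deriv_Th hγ α).symm
        exact hout.comp 0 hin
      have h2 : HasDerivAt (fun w : ℂ => Th γ (w - α)) (dα * 1) 0 := by
        have hin : HasDerivAt (fun w : ℂ => w - α) 1 0 := (hasDerivAt_id 0).sub_const α
        have hout : HasDerivAt (Th γ) dα ((0:ℂ) - α) := by
          rw [zero_sub, hdα, ← deriv_Th_neg hγ α]
          exact (Th_hasDerivAt hγ (-α)).congr_deriv (deriv_Th hγ (-α)).symm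
        exact hout.comp 0 hin
      exact (h1.add h2).congr_deriv (by ring)
    have hN0 : N 0 = 0 := by
      rw [hN]
      simp only [zero_add, zero_sub]
      rw [Th_odd]
      ring
    have hslopeN : Tendsto (fun w : ℂ => N w / w) (𝓝[≠] 0) (𝓝 (dα + dα)) := by
      have h := hasDerivAt_iff_tendsto_slope_zero.mp hNd
      refine h.congr fun w => ?_
      rw [zero_add, hN0, sub_zero, smul_eq_mul, div_eq_inv_mul]
    have hslopeT : Tendsto (fun w : ℂ => Th γ w / w) (𝓝[≠] 0) (𝓝 d0) := by
      have hTd : HasDerivAt (Th γ) d0 0 := by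
        rw [hd0]
        exact (Th_hasDerivAt hγ 0).congr_deriv (deriv_Th hγ 0).symm
      have h := hasDerivAt_iff_tendsto_slope_zero.mp hTd
      refine h.congr fun w => ?_
      rw [zero_add, Th_zero, sub_zero, smul_eq_mul, div_eq_inv_mul]
    have hratio : Tendsto (fun w : ℂ => N w / Th γ w) (𝓝[≠] 0) (𝓝 ((dα + dα) / d0)) := by
      have h := hslopeN.div hslopeT hd0ne
      refine h.congr' ?_
      filter_upwards [self_mem_nhdsWithin] with w hw
      have hw0 : w ≠ 0 := hw
      simp only [Pi.div_apply]
      rcases eq_or_ne (Th γ w) 0 with h0 | h0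
      · simp [h0]
      · field_simp
    have hlim : Tendsto (fun w : ℂ => (1 / (4 * Complex.sin α ^ 2)) *
        (1 - (d0 / (2 * dα)) * (N w / Th γ w)))
        (𝓝[≠] 0) (𝓝 ((1 / (4 * Complex.sin α ^ 2)) * (1 - (d0 / (2 * dα)) * ((dα + dα) / d0)))) :=
      tendsto_const_nhds.mul (tendsto_const_nhds.sub (tendsto_const_nhds.mul hratio))
    have hval : (1 / (4 * Complex.sin α ^ 2)) * (1 - (d0 / (2 * dα)) * ((dα + dα) / d0)) = 0 := by
      have h1 : (d0 / (2 * dα)) * ((dα + dα) / d0) = 1 := by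
        field_simp
        ring
      rw [h1]
      ring
    rw [hval] at hlim
    exact hlim
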